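/- In the linear classification problem of the previous statement, for any convex loss φ ∈ Φ and any bound b > 0, and for any finite sample containing at least one positive and one negative example, every maximum-margin unit-ℓ¹-norm direction λ (maximizing min_i y_i⟨λ, x_i⟩ over ‖λ‖₁ = 1) admits a scaling λ̂ = cλ with c > 0 such that ∫ φ(−y⟨λ̂, x⟩) dμ(x,y) ≥ b. -/

import Mathlib

open MeasureTheory
open scoped ENNReal NNReal

noncomputable def pPt (k : ℕ) : ℝ × ℝ := (1 - 0.5 * (4 : ℝ) ^ ((1 : ℤ) - k), 1)

noncomputable def nPt (k : ℕ) : ℝ × ℝ := (1, 1 - 0.3 * (4 : ℝ) ^ ((1 : ℤ) - k))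

noncomputable def muImp : Measure ((ℝ × ℝ) × ℝ) :=
  Measure.sum (fun k : ℕ =>
    ((2 : ENNReal)⁻¹ ^ (k + 2)) •
      (Measure.dirac (pPt k, (1 : ℝ)) + Measure.dirac (nPt k, (-1 : ℝ))))

/-- The (sample) margin of a direction `lam` on a finite sample `s`. -/
noncomputable def sampleMargin (s : Finset ((ℝ × ℝ) × ℝ)) (lam : ℝ × ℝ) : ℝ :=
  sInf ((fun z : (ℝ × ℝ) × ℝ => z.2 * (lam.1 * z.1.1 + lam.2 * z.1.2)) '' ↑s)


lemma phi_mono (φ : ℝ → ℝ) (hconv : ConvexOn ℝ Set.univ φ)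
    (hlim : Filter.Tendsto φ Filter.atBot (nhds 0)) : Monotone φ := by
  intro x y hxy
  rcases eq_or_lt_of_le hxy with rfl | hxy
  · exact le_rfl
  by_contra hlt
  push_neg at hlt
  set d : ℝ := (φ x - φ y) / (y - x) with hd
  have hd0 : 0 < d := div_pos (by linarith) (by linarith)
  obtain ⟨Z, hZ⟩ := Filter.eventually_atBot.mp
    (hlim.eventually_lt_const (show (0:ℝ) < 1 by norm_num))
  set z : ℝ := min Z (x - (1 + |φ x|) / d) with hz
  have hzx : z < x := lt_of_le_of_lt (min_le_right _ _)
    (by have : 0 < (1 + |φ x|) / d := div_pos (by positivity) hd0; linarith)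
  have hslope := hconv.slope_mono_adjacent (Set.mem_univ z) (Set.mem_univ y) hzx hxy
  -- (φ x - φ z)/(x - z) ≤ (φ y - φ x)/(y - x) = -d
  have h2 : (φ y - φ x) / (y - x) = -d := by
    rw [hd]; field_simp; ring
  rw [h2] at hslope
  have hxz : 0 < x - z := by linarith
  have h3 : φ x - φ z ≤ -d * (x - z) := by
    have := (div_le_iff₀ hxz).mp hslope
    linarith
  have h4 : x - z ≥ (1 + |φ x|) / d := by
    have := min_le_right Z (x - (1 + |φ x|) / d)
    have : z ≤ x - (1 + |φ x|) / d := min_le_right _ _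
    linarith
  have h5 : φ z ≥ φ x + d * (x - z) := by nlinarith
  have h6 : φ z < 1 := hZ z (min_le_left _ _)
  have h7 : d * (x - z) ≥ 1 + |φ x| := by
    rw [ge_iff_le, ← div_le_iff₀' hd0]; linarith
  have h8 : φ x ≥ -|φ x| := neg_abs_le _
  linarith

lemma phi_nonneg (φ : ℝ → ℝ) (hmono : Monotone φ)
    (hlim : Filter.Tendsto φ Filter.atBot (nhds 0)) : ∀ x, 0 ≤ φ x := by
  intro x
  by_contra hlt
  push_neg at hlt
  obtain ⟨Z, hZ⟩ := Filter.eventually_atBot.mp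
    (hlim.eventually_const_lt (show φ x < 0 from hlt))
  have h1 := hZ (min Z x) (min_le_left _ _)
  have h2 := hmono (min_le_right Z x)
  linarith

lemma phi_unbounded (φ : ℝ → ℝ) (hconv : ConvexOn ℝ Set.univ φ) (h0 : 0 < φ 0)
    (hmono : Monotone φ) (hnn : ∀ x, 0 ≤ φ x)
    (hlim : Filter.Tendsto φ Filter.atBot (nhds 0)) :
    ∀ B : ℝ, ∃ t : ℝ, B ≤ φ t := by
  intro B
  obtain ⟨Z, hZ⟩ := Filter.eventually_atBot.mp (hlim.eventually_lt_const h0)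
  set z : ℝ := min Z (-1) with hzdef
  have hz0 : z < 0 := lt_of_le_of_lt (min_le_right _ _) (by norm_num)
  have hzφ : φ z < φ 0 := hZ z (min_le_left _ _)
  set d : ℝ := (φ 0 - φ z) / (0 - z) with hd
  have hd0 : 0 < d := div_pos (by linarith) (by linarith)
  set t : ℝ := max (B / d) 1 with ht
  have ht0 : (0:ℝ) < t := lt_of_lt_of_le one_pos (le_max_right _ _)
  refine ⟨t, ?_⟩
  have hslope := hconv.slope_mono_adjacent (Set.mem_univ z) (Set.mem_univ t) hz0 ht0
  -- d ≤ (φ t - φ 0)/(t - 0)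
  have h1 : d ≤ (φ t - φ 0) / (t - 0) := by rw [hd]; exact hslope
  have h2 : φ t ≥ φ 0 + d * t := by
    have := (le_div_iff₀ (by linarith : (0:ℝ) < t - 0)).mp h1
    nlinarith
  have h3 : B / d ≤ t := le_max_left _ _
  have h4 : B ≤ d * t := by
    rw [← div_le_iff₀' hd0]; exact h3
  linarith

lemma t_pos (k : ℕ) : 0 < (4:ℝ) ^ ((1:ℤ) - k) := zpow_pos (by norm_num) _

lemma t_le4 (k : ℕ) : (4:ℝ) ^ ((1:ℤ) - k) ≤ 4 := by
  have h := zpow_le_zpow_right₀ (show (1:ℝ) ≤ 4 by norm_num)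
    (show (1:ℤ) - k ≤ 1 by omega)
  simpa using h

lemma t_anti {k K : ℕ} (h : k ≤ K) : (4:ℝ) ^ ((1:ℤ) - K) ≤ (4:ℝ) ^ ((1:ℤ) - k) :=
  zpow_le_zpow_right₀ (by norm_num) (by omega)

lemma t_small {e : ℝ} (he : 0 < e) : ∃ k : ℕ, (4:ℝ) ^ ((1:ℤ) - k) < e := by
  obtain ⟨n, hn⟩ := exists_pow_lt_of_lt_one (show 0 < e / 4 by linarith)
    (show (1/4 : ℝ) < 1 by norm_num)
  refine ⟨n, ?_⟩
  have h1 : (4:ℝ) ^ ((1:ℤ) - n) = 4 * (1/4 : ℝ) ^ n := by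
    rw [zpow_sub₀ (by norm_num : (4:ℝ) ≠ 0), zpow_one, zpow_natCast, div_pow, one_pow,
      mul_one_div]
  rw [h1]
  nlinarith
lemma pPt_inj : Function.Injective pPt := by
  intro j k h
  have h1 : (1:ℝ) - 0.5 * (4:ℝ) ^ ((1:ℤ) - j) = 1 - 0.5 * (4:ℝ) ^ ((1:ℤ) - k) :=
    congrArg Prod.fst h
  have h2 : (4:ℝ) ^ ((1:ℤ) - j) = (4:ℝ) ^ ((1:ℤ) - k) := by linarith
  have h3 : (1:ℤ) - j = (1:ℤ) - k :=
    zpow_right_injective₀ (by norm_num : (0:ℝ) < 4) (by norm_num) h2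
  omega

lemma nPt_inj : Function.Injective nPt := by
  intro j k h
  have h1 : (1:ℝ) - 0.3 * (4:ℝ) ^ ((1:ℤ) - j) = 1 - 0.3 * (4:ℝ) ^ ((1:ℤ) - k) :=
    congrArg Prod.snd h
  have h2 : (4:ℝ) ^ ((1:ℤ) - j) = (4:ℝ) ^ ((1:ℤ) - k) := by linarith
  have h3 : (1:ℤ) - j = (1:ℤ) - k :=
    zpow_right_injective₀ (by norm_num : (0:ℝ) < 4) (by norm_num) h2
  omega

set_option maxHeartbeats 2000000 in
lemma exists_neg_margin
    (s : Finset ((ℝ × ℝ) × ℝ))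
    (hs : ∀ z ∈ s, (∃ k, z = (pPt k, (1 : ℝ))) ∨ (∃ k, z = (nPt k, (-1 : ℝ))))
    (hpos : ∃ z ∈ s, z.2 = 1) (hneg : ∃ z ∈ s, z.2 = -1)
    (lam : ℝ × ℝ) (hnorm : |lam.1| + |lam.2| = 1)
    (hmax : ∀ lam' : ℝ × ℝ, |lam'.1| + |lam'.2| = 1 →
      sampleMargin s lam' ≤ sampleMargin s lam) :
    ∃ (k₀ : ℕ) (z₀ : (ℝ × ℝ) × ℝ),
      (z₀ = (pPt k₀, (1:ℝ)) ∨ z₀ = (nPt k₀, (-1:ℝ))) ∧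
      z₀.2 * (lam.1 * z₀.1.1 + lam.2 * z₀.1.2) < 0 := by
  -- the largest positive index K
  obtain ⟨K, hKmem, hKmax⟩ : ∃ K : ℕ, (pPt K, (1:ℝ)) ∈ s ∧
      ∀ k : ℕ, (pPt k, (1:ℝ)) ∈ s → k ≤ K := by
    have hPfin : {k : ℕ | (pPt k, (1:ℝ)) ∈ s}.Finite := by
      have he : {k : ℕ | (pPt k, (1:ℝ)) ∈ s}
          = (fun k : ℕ => ((pPt k, (1:ℝ)) : (ℝ×ℝ)×ℝ)) ⁻¹' ↑s := rfl
      rw [he]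
      refine Set.Finite.preimage ?_ s.finite_toSet
      intro x _ y _ hxy
      exact pPt_inj (congrArg Prod.fst hxy)
    have hne : hPfin.toFinset.Nonempty := by
      obtain ⟨z, hzs, hz2⟩ := hpos
      rcases hs z hzs with ⟨k, rfl⟩ | ⟨k, rfl⟩
      · exact ⟨k, by simp [Set.Finite.mem_toFinset]; exact hzs⟩
      · norm_num at hz2
    refine ⟨hPfin.toFinset.max' hne, ?_, ?_⟩
    · have := hPfin.toFinset.max'_mem hne
      simpa [Set.Finite.mem_toFinset] using this
    · intro k hk
      exact hPfin.toFinset.le_max' k (by simpa [Set.Finite.mem_toFinset] using hk)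
  -- the largest negative index J
  obtain ⟨J, hJmem, hJmax⟩ : ∃ J : ℕ, (nPt J, (-1:ℝ)) ∈ s ∧
      ∀ k : ℕ, (nPt k, (-1:ℝ)) ∈ s → k ≤ J := by
    have hPfin : {k : ℕ | (nPt k, (-1:ℝ)) ∈ s}.Finite := by
      have he : {k : ℕ | (nPt k, (-1:ℝ)) ∈ s}
          = (fun k : ℕ => ((nPt k, (-1:ℝ)) : (ℝ×ℝ)×ℝ)) ⁻¹' ↑s := rfl
      rw [he]
      refine Set.Finite.preimage ?_ s.finite_toSet
      intro x _ y _ hxy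
      exact nPt_inj (congrArg Prod.fst hxy)
    have hne : hPfin.toFinset.Nonempty := by
      obtain ⟨z, hzs, hz2⟩ := hneg
      rcases hs z hzs with ⟨k, rfl⟩ | ⟨k, rfl⟩
      · norm_num at hz2
      · exact ⟨k, by simp [Set.Finite.mem_toFinset]; exact hzs⟩
    refine ⟨hPfin.toFinset.max' hne, ?_, ?_⟩
    · have := hPfin.toFinset.max'_mem hne
      simpa [Set.Finite.mem_toFinset] using this
    · intro k hk
      exact hPfin.toFinset.le_max' k (by simpa [Set.Finite.mem_toFinset] using hk)
  set a := lam.1 with ha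
  set v := lam.2 with hv
  set u := (4:ℝ) ^ ((1:ℤ) - K) with hu
  set w := (4:ℝ) ^ ((1:ℤ) - J) with hw
  have hu0 : 0 < u := t_pos K
  have hu4 : u ≤ 4 := t_le4 K
  have hw0 : 0 < w := t_pos J
  have hw4 : w ≤ 4 := t_le4 J
  set D : ℝ := 4 - 0.5 * u - 0.3 * w with hD
  have hD0 : 0 < D := by rw [hD]; nlinarith
  set lamstar : ℝ × ℝ := (-(2 - 0.3 * w) / D, (2 - 0.5 * u) / D) with hls
  have hnstar : |lamstar.1| + |lamstar.2| = 1 := by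
    have e1 : |(-(2 - 0.3 * w) / D)| = (2 - 0.3 * w) / D := by
      rw [abs_div, abs_of_pos hD0, abs_neg, abs_of_nonneg (by nlinarith)]
    have e2 : |((2 - 0.5 * u) / D)| = (2 - 0.5 * u) / D := by
      rw [abs_div, abs_of_pos hD0, abs_of_nonneg (by nlinarith)]
    rw [hls]
    simp only
    rw [e1, e2, ← add_div, div_eq_one_iff_eq hD0.ne']
    rw [hD]; ring
  set γ : ℝ := (0.5 * u + 0.3 * w - 0.15 * (u * w)) / D with hγ
  have hγ0 : 0 < γ := by
    rw [hγ]
    apply div_pos _ hD0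
    nlinarith
  -- lower bound on margin of lamstar
  have hlow : γ ≤ sampleMargin s lamstar := by
    apply le_csInf ⟨_, Set.mem_image_of_mem _ (Finset.mem_coe.mpr hKmem)⟩
    rintro r ⟨z, hzs, rfl⟩
    rcases hs z (Finset.mem_coe.mp hzs) with ⟨k, rfl⟩ | ⟨k, rfl⟩
    · have hk : k ≤ K := hKmax k (Finset.mem_coe.mp hzs)
      have htk : u ≤ (4:ℝ) ^ ((1:ℤ) - k) := hu ▸ t_anti hk
      set y := (4:ℝ) ^ ((1:ℤ) - k) with hy
      have expand : (1:ℝ) * (lamstar.1 * (1 - 0.5 * y) + lamstar.2 * 1)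
          = ((0.3 * w - 0.5 * u) + 0.5 * y * (2 - 0.3 * w)) / D := by
        rw [hls]; field_simp; ring
      simp only [pPt]
      rw [expand, hγ, div_le_div_iff_of_pos_right hD0]
      nlinarith
    · have hk : k ≤ J := hJmax k (Finset.mem_coe.mp hzs)
      have htk : w ≤ (4:ℝ) ^ ((1:ℤ) - k) := hw ▸ t_anti hk
      set y := (4:ℝ) ^ ((1:ℤ) - k) with hy
      have expand : (-1:ℝ) * (lamstar.1 * 1 + lamstar.2 * (1 - 0.3 * y))
          = ((0.5 * u - 0.3 * w) + 0.3 * y * (2 - 0.5 * u)) / D := by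
        rw [hls]; field_simp; ring
      simp only [nPt]
      rw [expand, hγ, div_le_div_iff_of_pos_right hD0]
      nlinarith
  have hmargin : γ ≤ sampleMargin s lam := hlow.trans (hmax lamstar hnstar)
  have hbdd : BddBelow ((fun z : (ℝ × ℝ) × ℝ =>
      z.2 * (lam.1 * z.1.1 + lam.2 * z.1.2)) '' ↑s) :=
    (s.finite_toSet.image _).bddBelow
  have hf : γ ≤ a * (1 - 0.5 * u) + v := by
    have h1 := csInf_le hbdd (Set.mem_image_of_mem _ (Finset.mem_coe.mpr hKmem))
    have h2 := hmargin.trans h1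
    simp only [pPt] at h2
    rw [← hu] at h2
    linarith [h2]
  have hg : γ ≤ -(a + v * (1 - 0.3 * w)) := by
    have h1 := csInf_le hbdd (Set.mem_image_of_mem _ (Finset.mem_coe.mpr hJmem))
    have h2 := hmargin.trans h1
    simp only [nPt] at h2
    rw [← hw] at h2
    linarith [h2]
  have ha1 : |a| ≤ 1 := by have := abs_nonneg v; linarith
  have hv1 : |v| ≤ 1 := by have := abs_nonneg a; linarith
  have ha1' : -1 ≤ a ∧ a ≤ 1 := abs_le.mp ha1
  have hv1' : -1 ≤ v ∧ v ≤ 1 := abs_le.mp hv1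
  rcases lt_trichotomy (a + v) 0 with hav | hav | hav
  · -- a + v < 0 : far positive point is misclassified
    obtain ⟨k, hk⟩ := t_small (show 0 < 2 * (-(a+v)) by linarith)
    refine ⟨k, (pPt k, (1:ℝ)), Or.inl rfl, ?_⟩
    simp only [pPt]
    have hy0 : 0 < (4:ℝ) ^ ((1:ℤ) - k) := t_pos k
    nlinarith [mul_nonneg (show (0:ℝ) ≤ a + 1 by linarith [ha1'.1]) hy0.le]
  · -- a + v = 0 : contradiction with max-margin property
    exfalso
    have hva : v = -a := by linarith
    have hfa : γ ≤ -(0.5 * (a * u)) := by rw [hva] at hf; linarith [hf]; 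
    have haneg : a < 0 := by nlinarith
    have hahalf : a = -(1/2) := by
      rw [hva, abs_neg] at hnorm
      rw [abs_of_neg haneg] at hnorm
      linarith
    have hfu : γ ≤ 0.25 * u := by rw [hahalf] at hfa; linarith
    have hgw : γ ≤ 0.15 * w := by
      rw [hva, hahalf] at hg; linarith [hg]
    rcases lt_trichotomy (0.5 * u) (0.3 * w) with huw | huw | huw
    · -- 0.5u < 0.3w : γ > 0.25u, contradiction
      have : 0.25 * u < γ := by
        rw [hγ, lt_div_iff₀ hD0]
        nlinarith
      linarith
    · -- equality: number-theoretic impossibility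
      have h4K : (4:ℝ) ^ ((1:ℤ) - K) = 4 / 4 ^ K := by
        rw [zpow_sub₀ (by norm_num : (4:ℝ) ≠ 0), zpow_one, zpow_natCast]
      have h4J : (4:ℝ) ^ ((1:ℤ) - J) = 4 / 4 ^ J := by
        rw [zpow_sub₀ (by norm_num : (4:ℝ) ≠ 0), zpow_one, zpow_natCast]
      rw [hu, h4K, hw, h4J] at huw
      have hKp : (0:ℝ) < 4 ^ K := by positivity
      have hJp : (0:ℝ) < 4 ^ J := by positivity
      have hreal : (5:ℝ) * 4 ^ J = 3 * 4 ^ K := by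
        field_simp at huw
        nlinarith [huw]
      have hnat : 5 * 4 ^ J = 3 * 4 ^ K := by exact_mod_cast hreal
      have hdvd : (3:ℕ) ∣ 5 * 4 ^ J := ⟨4 ^ K, hnat⟩
      have h3p : Nat.Prime 3 := by norm_num
      rcases (Nat.Prime.dvd_mul h3p).mp hdvd with h | h
      · norm_num at h
      · have := Nat.Prime.dvd_of_dvd_pow h3p h
        norm_num at this
    · -- 0.3w < 0.5u : γ > 0.15w, contradiction
      have : 0.15 * w < γ := by
        rw [hγ, lt_div_iff₀ hD0]
        nlinarith
      linarith
  · -- a + v > 0 : far negative point is misclassified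
    obtain ⟨k, hk⟩ := t_small (show 0 < 3 * (a+v) by linarith)
    refine ⟨k, (nPt k, (-1:ℝ)), Or.inr rfl, ?_⟩
    simp only [nPt]
    have hy0 : 0 < (4:ℝ) ^ ((1:ℤ) - k) := t_pos k
    nlinarith [mul_nonneg (show (0:ℝ) ≤ 1 - v by linarith [hv1'.2]) hy0.le]

set_option maxHeartbeats 1000000 in
theorem max_margin_unbounded_risk
    (φ : ℝ → ℝ) (hconv : ConvexOn ℝ Set.univ φ) (h0 : 0 < φ 0)
    (hlim : Filter.Tendsto φ Filter.atBot (nhds 0))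
    (b : ℝ) (hb : 0 < b)
    (s : Finset ((ℝ × ℝ) × ℝ))
    (hs : ∀ z ∈ s, (∃ k, z = (pPt k, (1 : ℝ))) ∨ (∃ k, z = (nPt k, (-1 : ℝ))))
    (hpos : ∃ z ∈ s, z.2 = 1) (hneg : ∃ z ∈ s, z.2 = -1)
    (lam : ℝ × ℝ) (hnorm : |lam.1| + |lam.2| = 1)
    (hmax : ∀ lam' : ℝ × ℝ, |lam'.1| + |lam'.2| = 1 →
      sampleMargin s lam' ≤ sampleMargin s lam) :
    ∃ c : ℝ, 0 < c ∧
      b ≤ ∫ z, φ (-(z.2 * ((c * lam.1) * z.1.1 + (c * lam.2) * z.1.2))) ∂muImp := by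
  have hmono : Monotone φ := phi_mono φ hconv hlim
  have hnn : ∀ x, 0 ≤ φ x := phi_nonneg φ hmono hlim
  have hφc : Continuous φ := by
    have h := hconv.continuousOn isOpen_univ
    exact continuousOn_univ.mp h
  obtain ⟨k₀, z₀, hz₀, hmneg⟩ := exists_neg_margin s hs hpos hneg lam hnorm hmax
  set m : ℝ := z₀.2 * (lam.1 * z₀.1.1 + lam.2 * z₀.1.2) with hmdef
  obtain ⟨t, ht⟩ := phi_unbounded φ hconv h0 hmono hnn hlim (b * 2 ^ (k₀ + 2))
  set C : ℝ := max (t / (-m)) 1 with hCdef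
  have hC0 : 0 < C := lt_of_lt_of_le one_pos (le_max_right _ _)
  have hCt : t ≤ C * (-m) := by
    have h1 : t / (-m) ≤ C := le_max_left _ _
    rwa [div_le_iff₀ (by linarith : (0:ℝ) < -m)] at h1
  set f : (ℝ × ℝ) × ℝ → ℝ :=
    fun z => φ (-(z.2 * ((C * lam.1) * z.1.1 + (C * lam.2) * z.1.2))) with hfdef
  have hfc : Continuous f := by
    apply hφc.comp
    fun_prop
  have hmeas : Measurable fun z : (ℝ × ℝ) × ℝ => (‖f z‖₊ : ℝ≥0∞) :=
    hfc.measurable.nnnorm.coe_nnreal_ennreal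
  -- bound on atoms
  have ha1 : |lam.1| ≤ 1 := by have := abs_nonneg lam.2; linarith
  have hv1 : |lam.2| ≤ 1 := by have := abs_nonneg lam.1; linarith
  have hatom : ∀ z : (ℝ × ℝ) × ℝ, |z.1.1| ≤ 1 → |z.1.2| ≤ 1 → |z.2| ≤ 1 →
      f z ≤ φ C := by
    intro z h1 h2 h3
    apply hmono
    have e1 : |(C * lam.1) * z.1.1| ≤ C * |lam.1| := by
      rw [abs_mul, abs_mul, abs_of_pos hC0]
      exact mul_le_of_le_one_right (mul_nonneg hC0.le (abs_nonneg _)) h1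
    have e2 : |(C * lam.2) * z.1.2| ≤ C * |lam.2| := by
      rw [abs_mul, abs_mul, abs_of_pos hC0]
      exact mul_le_of_le_one_right (mul_nonneg hC0.le (abs_nonneg _)) h2
    have e3 : |(C * lam.1) * z.1.1 + (C * lam.2) * z.1.2| ≤ C := by
      calc |(C * lam.1) * z.1.1 + (C * lam.2) * z.1.2|
          ≤ |(C * lam.1) * z.1.1| + |(C * lam.2) * z.1.2| := abs_add_le _ _
        _ ≤ C * |lam.1| + C * |lam.2| := add_le_add e1 e2
        _ = C * (|lam.1| + |lam.2|) := by ring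
        _ = C := by rw [hnorm]; ring
    have e4 : |z.2 * ((C * lam.1) * z.1.1 + (C * lam.2) * z.1.2)| ≤ C := by
      rw [abs_mul]
      nlinarith [abs_nonneg (z.2), abs_nonneg ((C * lam.1) * z.1.1 + (C * lam.2) * z.1.2)]
    have := neg_abs_le (z.2 * ((C * lam.1) * z.1.1 + (C * lam.2) * z.1.2))
    linarith [abs_le.mp e4]
  have hfp : ∀ k : ℕ, f (pPt k, (1:ℝ)) ≤ φ C := by
    intro k
    apply hatom
    · simp only [pPt]
      rw [abs_le]
      constructor <;> nlinarith [t_pos k, t_le4 k]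
    · simp [pPt]
    · simp
  have hfn : ∀ k : ℕ, f (nPt k, (-1:ℝ)) ≤ φ C := by
    intro k
    apply hatom
    · simp [nPt]
    · simp only [nPt]
      rw [abs_le]
      constructor <;> nlinarith [t_pos k, t_le4 k]
    · simp
  have hcoe : ∀ x : ℝ, 0 ≤ x → x ≤ φ C → (‖x‖₊ : ℝ≥0∞) ≤ ENNReal.ofReal (φ C) := by
    intro x hx hxc
    rw [← enorm_eq_nnnorm, ← ofReal_norm, Real.norm_eq_abs, abs_of_nonneg hx]
    exact ENNReal.ofReal_le_ofReal hxc
  have hInt : Integrable f muImp := by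
    refine ⟨hfc.aestronglyMeasurable, ?_⟩
    show (∫⁻ z, ‖f z‖₊ ∂muImp) < ⊤
    unfold muImp
    rw [lintegral_sum_measure]
    have hterm : ∀ k : ℕ,
        (∫⁻ z, (‖f z‖₊ : ℝ≥0∞)
          ∂(((2 : ENNReal)⁻¹ ^ (k + 2)) •
            (Measure.dirac (pPt k, (1:ℝ)) + Measure.dirac (nPt k, (-1:ℝ)))))
        ≤ (2 : ENNReal)⁻¹ ^ (k + 2) * (2 * ENNReal.ofReal (φ C)) := by
      intro k
      rw [lintegral_smul_measure, lintegral_add_measure, lintegral_dirac' _ hmeas,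
        lintegral_dirac' _ hmeas]
      apply mul_le_mul_right
      have b1 := hcoe _ (hnn _) (hfp k)
      have b2 := hcoe _ (hnn _) (hfn k)
      calc (‖f (pPt k, (1:ℝ))‖₊ : ℝ≥0∞) + ‖f (nPt k, (-1:ℝ))‖₊
          ≤ ENNReal.ofReal (φ C) + ENNReal.ofReal (φ C) := add_le_add b1 b2
        _ = 2 * ENNReal.ofReal (φ C) := (two_mul _).symm
    calc ∑' k : ℕ, _ ≤ ∑' k : ℕ, (2 : ENNReal)⁻¹ ^ (k + 2) * (2 * ENNReal.ofReal (φ C)) :=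
          ENNReal.tsum_le_tsum hterm
      _ = (∑' k : ℕ, (2 : ENNReal)⁻¹ ^ (k + 2)) * (2 * ENNReal.ofReal (φ C)) :=
          ENNReal.tsum_mul_right
      _ < ⊤ := by
          apply ENNReal.mul_lt_top
          · have e1 : (∑' k : ℕ, (2 : ENNReal)⁻¹ ^ (k + 2))
                = (∑' k : ℕ, (2 : ENNReal)⁻¹ ^ k) * (2 : ENNReal)⁻¹ ^ 2 := by
              rw [← ENNReal.tsum_mul_right]
              congr 1; funext k; rw [pow_add]
            rw [e1, ENNReal.tsum_geometric, ENNReal.one_sub_inv_two]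
            exact ENNReal.mul_lt_top (ENNReal.inv_lt_top.mpr (by norm_num))
              (ENNReal.pow_lt_top (by norm_num))
          · exact ENNReal.mul_lt_top (by norm_num) ENNReal.ofReal_lt_top
  -- the component measure
  set ν : Measure ((ℝ × ℝ) × ℝ) :=
    ((2 : ENNReal)⁻¹ ^ (k₀ + 2)) •
      (Measure.dirac (pPt k₀, (1:ℝ)) + Measure.dirac (nPt k₀, (-1:ℝ))) with hν
  have hle : ν ≤ muImp := by
    rw [hν]
    unfold muImp
    exact Measure.le_sum _ k₀
  have hmono_int : ∫ z, f z ∂ν ≤ ∫ z, f z ∂muImp :=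
    integral_mono_measure hle (Filter.Eventually.of_forall fun z => hnn _) hInt
  have hip : Integrable f (Measure.dirac (pPt k₀, (1:ℝ))) := by
    refine ⟨hfc.aestronglyMeasurable, ?_⟩
    show (∫⁻ z, ‖f z‖₊ ∂_) < ⊤
    rw [lintegral_dirac' _ hmeas]
    exact ENNReal.coe_lt_top
  have hin : Integrable f (Measure.dirac (nPt k₀, (-1:ℝ))) := by
    refine ⟨hfc.aestronglyMeasurable, ?_⟩
    show (∫⁻ z, ‖f z‖₊ ∂_) < ⊤
    rw [lintegral_dirac' _ hmeas]
    exact ENNReal.coe_lt_top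
  have hcompute : ∫ z, f z ∂ν
      = ((2:ℝ) ^ (k₀ + 2))⁻¹ * (f (pPt k₀, (1:ℝ)) + f (nPt k₀, (-1:ℝ))) := by
    rw [hν, integral_smul_measure, integral_add_measure hip hin,
      integral_dirac, integral_dirac]
    have hw : ((2 : ENNReal)⁻¹ ^ (k₀ + 2)).toReal = ((2:ℝ) ^ (k₀ + 2))⁻¹ := by
      rw [ENNReal.toReal_pow, ENNReal.toReal_inv]
      rw [ENNReal.toReal_ofNat, inv_pow]
    rw [hw]
    simp [smul_eq_mul]
  have hfz : b * 2 ^ (k₀ + 2) ≤ f z₀ := by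
    have harg : -(z₀.2 * ((C * lam.1) * z₀.1.1 + (C * lam.2) * z₀.1.2)) = C * (-m) := by
      rw [hmdef]; ring
    calc b * 2 ^ (k₀ + 2) ≤ φ t := ht
      _ ≤ φ (C * (-m)) := hmono hCt
      _ = f z₀ := by rw [hfdef]; simp only; rw [harg]
  have hsum : b * 2 ^ (k₀ + 2) ≤ f (pPt k₀, (1:ℝ)) + f (nPt k₀, (-1:ℝ)) := by
    rcases hz₀ with h | h
    · rw [h] at hfz; linarith [hnn (-(((nPt k₀, (-1:ℝ)) : (ℝ×ℝ)×ℝ).2 *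
        ((C * lam.1) * (nPt k₀).1 + (C * lam.2) * (nPt k₀).2)))]
    · rw [h] at hfz; linarith [hnn (-(((pPt k₀, (1:ℝ)) : (ℝ×ℝ)×ℝ).2 *
        ((C * lam.1) * (pPt k₀).1 + (C * lam.2) * (pPt k₀).2)))]
  refine ⟨C, hC0, ?_⟩
  have hfinal : b ≤ ∫ z, f z ∂ν := by
    rw [hcompute]
    have hpow : (0:ℝ) < 2 ^ (k₀ + 2) := by positivity
    rw [← mul_le_mul_iff_right₀ hpow]
    calc (2:ℝ) ^ (k₀ + 2) * b = b * 2 ^ (k₀ + 2) := by ring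
      _ ≤ f (pPt k₀, (1:ℝ)) + f (nPt k₀, (-1:ℝ)) := hsum
      _ = (2:ℝ) ^ (k₀ + 2) * (((2:ℝ) ^ (k₀ + 2))⁻¹ *
            (f (pPt k₀, (1:ℝ)) + f (nPt k₀, (-1:ℝ)))) := by
          field_simp
  exact hfinal.trans hmono_int
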